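/- Let a ∈ G be a central element and {F_g, ε_{g,h}} a G-action on an additive category C. Then setting (c_a)_g = (ε_{g,a})^{-1} ∘ ε_{a,g} : F_a F_g ≅ F_g F_a makes (F_a, c_a) a G-equivariant endofunctor of C, and the induced endofunctor (F_a, c_a)^G on C^G is isomorphic to the identity functor via the natural isomorphism ψ with ψ_{(X,α)} = α_a. -/

import Mathlib

open CategoryTheory

universe v u v₂ u₂

structure GrpAction (G : Type*) [Group G] (C : Type u) [Category.{v} C] where
  F : G → C ⥤ C
  isEquiv : ∀ g : G, (F g).IsEquivalence
  ε : ∀ g h : G, F h ⋙ F g ≅ F (g * h)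
  cocycle : ∀ (g h k : G) (X : C),
    (ε g h).hom.app ((F k).obj X) ≫ (ε (g * h) k).hom.app X ≫
        eqToHom (by rw [mul_assoc]) =
      (F g).map ((ε h k).hom.app X) ≫ (ε g (h * k)).hom.app X

variable {G : Type*} [Group G] {C : Type u} [Category.{v} C] {D : Type u₂} [Category.{v₂} D]

structure EqvObj (A : GrpAction G C) where
  pt : C
  α : ∀ g : G, pt ≅ (A.F g).obj pt
  compat : ∀ g h : G, (α (g * h)).hom =
    (α g).hom ≫ (A.F g).map ((α h).hom) ≫ (A.ε g h).hom.app pt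

instance (A : GrpAction G C) : Category (EqvObj A) where
  Hom M N := { f : M.pt ⟶ N.pt // ∀ g : G,
    f ≫ (N.α g).hom = (M.α g).hom ≫ (A.F g).map f }
  id M := ⟨𝟙 M.pt, by intro g; simp⟩
  comp {M N P} f g := ⟨f.1 ≫ g.1, by
    intro h
    rw [Category.assoc, g.2, ← Category.assoc, f.2, Category.assoc, ← Functor.map_comp]⟩
  id_comp f := Subtype.ext (Category.id_comp f.1)
  comp_id f := Subtype.ext (Category.comp_id f.1)
  assoc f g h := Subtype.ext (Category.assoc f.1 g.1 h.1)

/-- A `G`-equivariant functor between categories with `G`-actions. -/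
structure EqvFunctor (A : GrpAction G C) (B : GrpAction G D) where
  F : C ⥤ D
  δ : ∀ g : G, A.F g ⋙ F ≅ F ⋙ B.F g
  compat : ∀ (g h : G) (X : C),
    F.map ((A.ε g h).hom.app X) ≫ (δ (g * h)).hom.app X =
      (δ g).hom.app ((A.F h).obj X) ≫ (B.F g).map ((δ h).hom.app X) ≫
        (B.ε g h).hom.app (F.obj X)

/-- The functor `(F, δ)^G` between categories of equivariant objects induced by a
`G`-equivariant functor. -/
def inducedFunctor {A : GrpAction G C} {B : GrpAction G D} (E : EqvFunctor A B) :
    EqvObj A ⥤ EqvObj B where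
  obj M :=
  { pt := E.F.obj M.pt
    α := fun g => E.F.mapIso (M.α g) ≪≫ (E.δ g).app M.pt
    compat := by
      intro g h
      simp only [Iso.trans_hom, Functor.mapIso_hom, Iso.app_hom]
      rw [M.compat g h]
      simp only [Functor.map_comp, Category.assoc]
      rw [E.compat g h M.pt]
      have nat := (E.δ g).hom.naturality (M.α h).hom
      simp only [Functor.comp_map] at nat
      rw [← Category.assoc ((E.δ g).hom.app M.pt), ← nat]
      simp [Category.assoc] }
  map {M N} f := ⟨E.F.map f.1, by
    intro g
    simp only [Iso.trans_hom, Functor.mapIso_hom, Iso.app_hom]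
    rw [← Category.assoc, ← E.F.map_comp, f.2, E.F.map_comp, Category.assoc]
    have nat := (E.δ g).hom.naturality f.1
    simp only [Functor.comp_map] at nat
    rw [nat, ← Category.assoc]⟩
  map_id M := Subtype.ext (E.F.map_id M.pt)
  map_comp f g := Subtype.ext (E.F.map_comp f.1 g.1)

/-- The natural isomorphisms `(c_a)_g = ε_{g,a}⁻¹ ∘ ε_{a,g} : F_a F_g ≅ F_g F_a` attached
to a central element `a ∈ G`. -/
def ca {G : Type*} [Group G] {C : Type u} [Category.{v} C] (A : GrpAction G C)
    (a : G) (ha : ∀ g : G, a * g = g * a) (g : G) : A.F g ⋙ A.F a ≅ A.F a ⋙ A.F g :=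
  A.ε a g ≪≫ eqToIso (by rw [ha]) ≪≫ (A.ε g a).symm

section Aux

variable (A : GrpAction G C)

lemma ε_congr_left' {g g' : G} (e : g = g') (h : G) (X : C) :
    eqToHom (show ((A.F g).obj ((A.F h).obj X)) = ((A.F g').obj ((A.F h).obj X)) by
        rw [e]) ≫ (A.ε g' h).hom.app X =
      (A.ε g h).hom.app X ≫ eqToHom (by rw [e]) := by
  subst e; simp

lemma ε_congr_right' (g : G) {h h' : G} (e : h = h') (X : C) :
    eqToHom (show ((A.F g).obj ((A.F h).obj X)) = ((A.F g).obj ((A.F h').obj X)) by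
        rw [e]) ≫ (A.ε g h').hom.app X =
      (A.ε g h).hom.app X ≫ eqToHom (by rw [e]) := by
  subst e; simp

lemma α_congr {A : GrpAction G C} (M : EqvObj A) {g g' : G} (e : g = g') :
    (M.α g).hom ≫ eqToHom (by rw [e]) = (M.α g').hom := by
  subst e; simp

lemma ca_compat (a : G) (ha : ∀ g : G, a * g = g * a) (g h : G) (X : C) :
    (A.F a).map ((A.ε g h).hom.app X) ≫ (ca A a ha (g * h)).hom.app X =
      (ca A a ha g).hom.app ((A.F h).obj X) ≫
        (A.F g).map ((ca A a ha h).hom.app X) ≫ (A.ε g h).hom.app ((A.F a).obj X) := by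
  have C1 := (A.cocycle a g h X).symm
  have C1r := reassoc_of% C1
  have C2 := (A.cocycle g a h X).symm
  have C2r := reassoc_of% C2
  have C3 : (A.ε g h).hom.app ((A.F a).obj X) ≫ (A.ε (g * h) a).hom.app X =
      (A.F g).map ((A.ε h a).hom.app X) ≫ (A.ε g (h * a)).hom.app X ≫
        eqToHom (by rw [mul_assoc]) := by
    have c := A.cocycle g h a X
    rw [← Category.assoc, comp_eqToHom_iff] at c
    rw [c]
    simp
  have Rr := reassoc_of% (ε_congr_right' A g (ha h) X)
  have Lr := reassoc_of% (ε_congr_left' A (ha g) h X)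
  simp only [ca, Iso.trans_hom, eqToIso.hom, Iso.symm_hom, NatTrans.comp_app,
    eqToHom_app, Functor.map_comp, eqToHom_map, Category.assoc]
  rw [← cancel_mono ((A.ε (g * h) a).hom.app X)]
  simp only [Category.assoc, Iso.inv_hom_id_app, Category.comp_id]
  rw [C1r, C3]
  rw [← Functor.map_comp_assoc, Iso.inv_hom_id_app]
  simp only [CategoryTheory.Functor.map_id, Category.id_comp]
  rw [Rr, C2r]
  simp only [Iso.inv_hom_id_app_assoc]
  rw [Lr]
  simp only [Category.assoc, eqToHom_trans]

end Aux

/-- Let `a ∈ G` be central and `{F_g, ε_{g,h}}` a `G`-action on `C`.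
Then `(F_a, c_a)` with `(c_a)_g = ε_{g,a}⁻¹ ∘ ε_{a,g}` is a `G`-equivariant endofunctor of
`C`, and the induced endofunctor `(F_a, c_a)^G` of `C^G` is isomorphic to the identity
functor via the natural isomorphism `ψ` with `ψ_{(X,α)} = α_a`. -/
theorem central_element_equivariant_endofunctor {G : Type*} [Group G]
    {C : Type u} [Category.{v} C] (A : GrpAction G C) (a : G)
    (ha : ∀ g : G, a * g = g * a) :
    ∃ hcompat : ∀ (g h : G) (X : C),
      (A.F a).map ((A.ε g h).hom.app X) ≫ (ca A a ha (g * h)).hom.app X =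
        (ca A a ha g).hom.app ((A.F h).obj X) ≫
          (A.F g).map ((ca A a ha h).hom.app X) ≫ (A.ε g h).hom.app ((A.F a).obj X),
      ∃ ψ : 𝟭 (EqvObj A) ≅
          inducedFunctor (⟨A.F a, ca A a ha, hcompat⟩ : EqvFunctor A A),
        ∀ M : EqvObj A, (ψ.hom.app M).1 = (M.α a).hom := by
  refine ⟨fun g h X => ca_compat A a ha g h X, ?_⟩
  have key : ∀ (M : EqvObj A) (g : G),
      (M.α a).hom ≫ ((((inducedFunctor (⟨A.F a, ca A a ha,
        fun g h X => ca_compat A a ha g h X⟩ : EqvFunctor A A)).obj M)).α g).hom =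
        (M.α g).hom ≫ (A.F g).map (M.α a).hom := by
    intro M g
    show (M.α a).hom ≫ (A.F a).map (M.α g).hom ≫ (ca A a ha g).hom.app M.pt = _
    simp only [ca, Iso.trans_hom, eqToIso.hom, Iso.symm_hom, NatTrans.comp_app,
      eqToHom_app]
    have hg : (M.α (a * g)).hom ≫ eqToHom (by rw [ha]) = (M.α (g * a)).hom :=
      α_congr M (ha g)
    rw [M.compat a g, M.compat g a] at hg
    simp only [Category.assoc] at hg ⊢
    rw [← Category.assoc _ _ ((A.ε g a).inv.app M.pt), ← Category.assoc _ _
      ((A.ε g a).inv.app M.pt), ← Category.assoc, hg]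
    simp
  refine ⟨NatIso.ofComponents (fun M =>
    { hom := ⟨(M.α a).hom, fun g => key M g⟩
      inv := ⟨(M.α a).inv, fun g => by
        show (M.α a).inv ≫ (M.α g).hom = @CategoryStruct.comp C _ ((A.F a).obj M.pt)
          ((A.F g).obj ((A.F a).obj M.pt)) ((A.F g).obj M.pt)
          (((inducedFunctor (⟨A.F a, ca A a ha,
          fun g h X => ca_compat A a ha g h X⟩ : EqvFunctor A A)).obj M).α g).hom
            ((A.F g).map (M.α a).inv)
        erw [Iso.inv_comp_eq, ← Category.assoc, key M g, Category.assoc,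
          ← CategoryTheory.Functor.map_comp, Iso.hom_inv_id,
          CategoryTheory.Functor.map_id, Category.comp_id]⟩
      hom_inv_id := Subtype.ext (M.α a).hom_inv_id
      inv_hom_id := Subtype.ext (M.α a).inv_hom_id })
    (fun {M N} f => Subtype.ext (f.2 a)), fun M => rfl⟩
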